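/- Let W be a nonzero complex 3×3 matrix that is symmetric (Wᵀ = W). Then W·W = 0 (matrix product) if and only if there exists a vector l ∈ ℂ³ with l·l = 0 (bilinear dot product, no conjugation) such that W = l lᵀ (the matrix with entries W_{ij} = l_i l_j). Moreover, in this case l ≠ 0 and the trace of W is zero. -/

import Mathlib

open Matrix BigOperators

set_option maxHeartbeats 2000000 in
lemma typeN_aux (W : Matrix (Fin 3) (Fin 3) ℂ) (hW : W ≠ 0) (hsym : Wᵀ = W)
    (h : W * W = 0) :
    (∃ l : Fin 3 → ℂ, (∑ i, l i * l i) = 0 ∧ W = Matrix.vecMulVec l l) ∧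
      Matrix.trace W = 0 := by
  have hb : W 1 0 = W 0 1 := by conv_lhs => rw [← hsym, Matrix.transpose_apply]
  have hc : W 2 0 = W 0 2 := by conv_lhs => rw [← hsym, Matrix.transpose_apply]
  have he : W 2 1 = W 1 2 := by conv_lhs => rw [← hsym, Matrix.transpose_apply]
  have hE1 := congrFun (congrFun h 0) 0
  have hE2 := congrFun (congrFun h 0) 1
  have hE3 := congrFun (congrFun h 0) 2
  have hE4 := congrFun (congrFun h 1) 1
  have hE5 := congrFun (congrFun h 1) 2
  have hE6 := congrFun (congrFun h 2) 2
  simp only [Matrix.mul_apply, Fin.sum_univ_three, Matrix.zero_apply, hb, hc, he]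
    at hE1 hE2 hE3 hE4 hE5 hE6
  -- determinant vanishes
  have hdet : W.det = 0 := by
    have h2 : W.det ^ 2 = 0 := by rw [sq, ← Matrix.det_mul, h]; exact Matrix.det_zero
    exact pow_eq_zero_iff (two_ne_zero) |>.mp h2
  rw [Matrix.det_fin_three] at hdet
  simp only [hb, hc, he] at hdet
  -- second symmetric invariant annihilates W
  have hsa : (W 0 0 * W 1 1 - W 0 1 * W 0 1 + (W 0 0 * W 2 2 - W 0 2 * W 0 2)
      + (W 1 1 * W 2 2 - W 1 2 * W 1 2)) * W 0 0 = 0 := by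
    linear_combination hdet + (W 1 1 + W 2 2) * hE1 - W 0 1 * hE2 - W 0 2 * hE3
  have hsb : (W 0 0 * W 1 1 - W 0 1 * W 0 1 + (W 0 0 * W 2 2 - W 0 2 * W 0 2)
      + (W 1 1 * W 2 2 - W 1 2 * W 1 2)) * W 0 1 = 0 := by
    linear_combination (W 1 1 + W 2 2) * hE2 - W 0 1 * hE4 - W 0 2 * hE5
  have hsc : (W 0 0 * W 1 1 - W 0 1 * W 0 1 + (W 0 0 * W 2 2 - W 0 2 * W 0 2)
      + (W 1 1 * W 2 2 - W 1 2 * W 1 2)) * W 0 2 = 0 := by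
    linear_combination (W 1 1 + W 2 2) * hE3 - W 0 1 * hE5 - W 0 2 * hE6
  have hsd : (W 0 0 * W 1 1 - W 0 1 * W 0 1 + (W 0 0 * W 2 2 - W 0 2 * W 0 2)
      + (W 1 1 * W 2 2 - W 1 2 * W 1 2)) * W 1 1 = 0 := by
    linear_combination hdet + (W 0 0 + W 2 2) * hE4 - W 0 1 * hE2 - W 1 2 * hE5
  have hse : (W 0 0 * W 1 1 - W 0 1 * W 0 1 + (W 0 0 * W 2 2 - W 0 2 * W 0 2)
      + (W 1 1 * W 2 2 - W 1 2 * W 1 2)) * W 1 2 = 0 := by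
    linear_combination (W 0 0 + W 2 2) * hE5 - W 0 1 * hE3 - W 1 2 * hE6
  have hsf : (W 0 0 * W 1 1 - W 0 1 * W 0 1 + (W 0 0 * W 2 2 - W 0 2 * W 0 2)
      + (W 1 1 * W 2 2 - W 1 2 * W 1 2)) * W 2 2 = 0 := by
    linear_combination hdet + (W 0 0 + W 1 1) * hE6 - W 0 2 * hE3 - W 1 2 * hE5
  -- some entry is nonzero
  have hex : ∃ i j, W i j ≠ 0 := by
    by_contra hcon
    push_neg at hcon
    exact hW (by ext i j; simpa using hcon i j)
  have hS : W 0 0 * W 1 1 - W 0 1 * W 0 1 + (W 0 0 * W 2 2 - W 0 2 * W 0 2)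
      + (W 1 1 * W 2 2 - W 1 2 * W 1 2) = 0 := by
    obtain ⟨i, j, hij⟩ := hex
    fin_cases i <;> fin_cases j <;>
      [ exact (mul_eq_zero.mp hsa).resolve_right hij;
        exact (mul_eq_zero.mp hsb).resolve_right hij;
        exact (mul_eq_zero.mp hsc).resolve_right hij;
        exact (mul_eq_zero.mp hsb).resolve_right (hb ▸ hij);
        exact (mul_eq_zero.mp hsd).resolve_right hij;
        exact (mul_eq_zero.mp hse).resolve_right hij;
        exact (mul_eq_zero.mp hsc).resolve_right (hc ▸ hij);
        exact (mul_eq_zero.mp hse).resolve_right (he ▸ hij);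
        exact (mul_eq_zero.mp hsf).resolve_right hij ]
  -- trace vanishes
  have ht : W 0 0 + W 1 1 + W 2 2 = 0 := by
    have h2 : (W 0 0 + W 1 1 + W 2 2) * (W 0 0 + W 1 1 + W 2 2) = 0 := by
      linear_combination hE1 + hE4 + hE6 + 2 * hS
    exact mul_self_eq_zero.mp h2
  -- all 2×2 minors vanish
  have hM1 : W 0 0 * W 1 1 - W 0 1 * W 0 1 = 0 := by
    linear_combination hE6 - W 2 2 * ht + hS
  have hM2 : W 0 0 * W 2 2 - W 0 2 * W 0 2 = 0 := by
    linear_combination hE4 - W 1 1 * ht + hS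
  have hM4 : W 1 1 * W 2 2 - W 1 2 * W 1 2 = 0 := by
    linear_combination hE1 - W 0 0 * ht + hS
  have hM5 : W 0 1 * W 2 2 - W 0 2 * W 1 2 = 0 := by
    linear_combination W 0 1 * ht - hE2
  have hM6 : W 0 1 * W 1 2 - W 0 2 * W 1 1 = 0 := by
    linear_combination hE3 - W 0 2 * ht
  have hM3 : W 0 0 * W 1 2 - W 0 1 * W 0 2 = 0 := by
    linear_combination W 1 2 * ht - hE5
  -- trace statement
  have htrace : Matrix.trace W = 0 := by
    rw [Matrix.trace_fin_three]; linear_combination ht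
  refine ⟨?_, htrace⟩
  -- some diagonal entry is nonzero
  have hdiag : W 0 0 ≠ 0 ∨ W 1 1 ≠ 0 ∨ W 2 2 ≠ 0 := by
    by_contra hcon
    push_neg at hcon
    obtain ⟨ha0, hd0, hf0⟩ := hcon
    apply hW
    have hb0 : W 0 1 = 0 := by
      have : W 0 1 * W 0 1 = 0 := by linear_combination -hM1 + W 1 1 * ha0
      exact mul_self_eq_zero.mp this
    have hc0 : W 0 2 = 0 := by
      have : W 0 2 * W 0 2 = 0 := by linear_combination -hM2 + W 2 2 * ha0
      exact mul_self_eq_zero.mp this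
    have he0 : W 1 2 = 0 := by
      have : W 1 2 * W 1 2 = 0 := by linear_combination -hM4 + W 2 2 * hd0
      exact mul_self_eq_zero.mp this
    ext i j
    fin_cases i <;> fin_cases j <;>
      simp [ha0, hb0, hc0, hd0, he0, hf0, hb, hc, he]
  rcases hdiag with ha | hd | hf
  · obtain ⟨s, hs2⟩ := IsAlgClosed.exists_pow_nat_eq (W 0 0) (n := 2) two_pos
    have hs0 : s ≠ 0 := by
      intro h0; rw [h0] at hs2; exact ha (by linear_combination -hs2)
    refine ⟨![s, W 0 1 / s, W 0 2 / s], ?_, ?_⟩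
    · simp only [Fin.sum_univ_three, Matrix.cons_val_zero, Matrix.cons_val_one,
        Matrix.head_cons, Matrix.cons_val_two, Matrix.tail_cons]
      field_simp
      linear_combination hE1 + (s ^ 2 + W 0 0) * hs2
    · ext i j
      fin_cases i <;> fin_cases j <;>
        simp only [show (⟨0, by omega⟩ : Fin 3) = 0 from rfl,
          show (⟨1, by omega⟩ : Fin 3) = 1 from rfl,
          show (⟨2, by omega⟩ : Fin 3) = 2 from rfl,
          Matrix.vecMulVec_apply, Matrix.cons_val_zero, Matrix.cons_val_one,
          Matrix.head_cons, Matrix.cons_val_two, Matrix.tail_cons, Fin.isValue]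
      · linear_combination -hs2
      · field_simp
      · field_simp
      · rw [hb]; field_simp
      · field_simp
        linear_combination W 1 1 * hs2 + hM1
      · field_simp
        linear_combination W 1 2 * hs2 + hM3
      · rw [hc]; field_simp
      · rw [he]; field_simp
        linear_combination W 1 2 * hs2 + hM3
      · field_simp
        linear_combination W 2 2 * hs2 + hM2
  · obtain ⟨s, hs2⟩ := IsAlgClosed.exists_pow_nat_eq (W 1 1) (n := 2) two_pos
    have hs0 : s ≠ 0 := by
      intro h0; rw [h0] at hs2; exact hd (by linear_combination -hs2)
    refine ⟨![W 0 1 / s, s, W 1 2 / s], ?_, ?_⟩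
    · simp only [Fin.sum_univ_three, Matrix.cons_val_zero, Matrix.cons_val_one,
        Matrix.head_cons, Matrix.cons_val_two, Matrix.tail_cons]
      field_simp
      linear_combination hE4 + (s ^ 2 + W 1 1) * hs2
    · ext i j
      fin_cases i <;> fin_cases j <;>
        simp only [show (⟨0, by omega⟩ : Fin 3) = 0 from rfl,
          show (⟨1, by omega⟩ : Fin 3) = 1 from rfl,
          show (⟨2, by omega⟩ : Fin 3) = 2 from rfl,
          Matrix.vecMulVec_apply, Matrix.cons_val_zero, Matrix.cons_val_one,
          Matrix.head_cons, Matrix.cons_val_two, Matrix.tail_cons, Fin.isValue]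
      · field_simp
        linear_combination W 0 0 * hs2 + hM1
      · field_simp
      · field_simp
        linear_combination W 0 2 * hs2 - hM6
      · rw [hb]; field_simp
      · linear_combination -hs2
      · field_simp
      · rw [hc]; field_simp
        linear_combination W 0 2 * hs2 - hM6
      · rw [he]; field_simp
      · field_simp
        linear_combination W 2 2 * hs2 + hM4
  · obtain ⟨s, hs2⟩ := IsAlgClosed.exists_pow_nat_eq (W 2 2) (n := 2) two_pos
    have hs0 : s ≠ 0 := by
      intro h0; rw [h0] at hs2; exact hf (by linear_combination -hs2)
    refine ⟨![W 0 2 / s, W 1 2 / s, s], ?_, ?_⟩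
    · simp only [Fin.sum_univ_three, Matrix.cons_val_zero, Matrix.cons_val_one,
        Matrix.head_cons, Matrix.cons_val_two, Matrix.tail_cons]
      field_simp
      linear_combination hE6 + (s ^ 2 + W 2 2) * hs2
    · ext i j
      fin_cases i <;> fin_cases j <;>
        simp only [show (⟨0, by omega⟩ : Fin 3) = 0 from rfl,
          show (⟨1, by omega⟩ : Fin 3) = 1 from rfl,
          show (⟨2, by omega⟩ : Fin 3) = 2 from rfl,
          Matrix.vecMulVec_apply, Matrix.cons_val_zero, Matrix.cons_val_one,
          Matrix.head_cons, Matrix.cons_val_two, Matrix.tail_cons, Fin.isValue]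
      · field_simp
        linear_combination W 0 0 * hs2 + hM2
      · field_simp
        linear_combination W 0 1 * hs2 + hM5
      · field_simp
      · rw [hb]; field_simp
        linear_combination W 0 1 * hs2 + hM5
      · field_simp
        linear_combination W 1 1 * hs2 + hM4
      · field_simp
      · rw [hc]; field_simp
      · rw [he]; field_simp
      · linear_combination -hs2

/-- A nonzero symmetric complex 3×3 matrix `W` satisfies `W·W = 0` iff
`W = l lᵀ` for some vector `l` with `l·l = 0` (bilinear dot product); moreover, in
this case any such `l` is nonzero and the trace of `W` vanishes. -/
theorem typeN_canonical_form (W : Matrix (Fin 3) (Fin 3) ℂ)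
    (hW : W ≠ 0) (hsym : Wᵀ = W) :
    (W * W = 0 ↔ ∃ l : Fin 3 → ℂ, (∑ i, l i * l i) = 0 ∧ W = Matrix.vecMulVec l l) ∧
    (W * W = 0 →
      (∀ l : Fin 3 → ℂ, W = Matrix.vecMulVec l l → l ≠ 0) ∧ Matrix.trace W = 0) := by
  constructor
  · constructor
    · intro h
      exact (typeN_aux W hW hsym h).1
    · rintro ⟨l, hl, rfl⟩
      simp only [Fin.sum_univ_three] at hl
      ext i j
      simp only [Matrix.mul_apply, Fin.sum_univ_three, Matrix.vecMulVec_apply,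
        Matrix.zero_apply]
      linear_combination (l i * l j) * hl
  · intro h
    refine ⟨?_, (typeN_aux W hW hsym h).2⟩
    intro l hWl hl0
    apply hW
    rw [hWl, hl0]
    ext i j
    simp [Matrix.vecMulVec_apply]
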